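/- Let F be a connected GSC, n ≥ 1, 𝐣 = j₁⋯j_n ∈ D^n, and ω, τ ∈ D \ {j₁}. Then the following are equivalent: (1) the vertex sets ωD^{n−1} and τD^{n−1} lie in different connected components of the graph Γ_n − {𝐣}; (2) φ_ω(F) and φ_τ(F) lie in different connected components of ⋃_{η ∈ D^n \ {𝐣}} φ_η(F). -/
import Mathlib


open Set Topology

noncomputable def phi (N : ℕ) (i : ℕ × ℕ) (p : ℝ × ℝ) : ℝ × ℝ :=
  ((p.1 + (i.1 : ℝ)) / (N : ℝ), (p.2 + (i.2 : ℝ)) / (N : ℝ))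

noncomputable def phiW (N : ℕ) (l : List (ℕ × ℕ)) : ℝ × ℝ → ℝ × ℝ :=
  l.foldr (fun i g => phi N i ∘ g) id

def Words (D : Finset (ℕ × ℕ)) (k : ℕ) : Set (List (ℕ × ℕ)) :=
  {l | l.length = k ∧ ∀ a ∈ l, a ∈ D}

def GoodDigits (N : ℕ) (D : Finset (ℕ × ℕ)) : Prop :=
  2 ≤ N ∧ (∀ i ∈ D, i.1 < N ∧ i.2 < N) ∧ 1 < D.card ∧ D.card < N ^ 2

def IsAttractor (N : ℕ) (D : Finset (ℕ × ℕ)) (F : Set (ℝ × ℝ)) : Prop :=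
  F.Nonempty ∧ IsCompact F ∧ F = ⋃ i ∈ D, phi N i '' F

def OmegaW (N : ℕ) (D : Finset (ℕ × ℕ)) (F : Set (ℝ × ℝ)) (x : ℝ × ℝ) (k : ℕ) :
    Set (List (ℕ × ℕ)) :=
  {l | l ∈ Words D k ∧ x ∈ phiW N l '' F}

def Ek (N : ℕ) (D : Finset (ℕ × ℕ)) (F : Set (ℝ × ℝ)) (x : ℝ × ℝ) (k : ℕ) :
    Set (ℝ × ℝ) :=
  ⋃ l ∈ Words D k \ OmegaW N D F x k, phiW N l '' F

def IsRep (N : ℕ) (D : Finset (ℕ × ℕ)) (F : Set (ℝ × ℝ)) (x : ℝ × ℝ)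
    (ii : ℕ → ℕ × ℕ) : Prop :=
  (∀ k, ii k ∈ D) ∧ ∀ k : ℕ, x ∈ phiW N (List.ofFn fun j : Fin k => ii (j : ℕ)) '' F

def SepComp (E A B : Set (ℝ × ℝ)) : Prop :=
  A ⊆ E ∧ B ⊆ E ∧
    ∀ y ∈ A, ∀ z ∈ B, connectedComponentIn E y ≠ connectedComponentIn E z

def WellSep (N : ℕ) (D : Finset (ℕ × ℕ)) (F : Set (ℝ × ℝ)) (x : ℝ × ℝ) (n : ℕ)
    (ω τ : List (ℕ × ℕ)) : Prop :=
  ∀ p : ℕ, 1 ≤ p → SepComp (Ek N D F x (n + p)) (phiW N ω '' F) (phiW N τ '' F)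

def hataRel (N : ℕ) (D : Finset (ℕ × ℕ)) (F : Set (ℝ × ℝ)) (n : ℕ)
    (jw : List (ℕ × ℕ)) (l l' : List (ℕ × ℕ)) : Prop :=
  l ∈ Words D n ∧ l' ∈ Words D n ∧ l ≠ jw ∧ l' ≠ jw ∧ l ≠ l' ∧
    ((phiW N l '' F) ∩ (phiW N l' '' F)).Nonempty

def hataMinus (N : ℕ) (D : Finset (ℕ × ℕ)) (F : Set (ℝ × ℝ)) (n : ℕ)
    (jw : List (ℕ × ℕ)) : SimpleGraph (List (ℕ × ℕ)) :=
  SimpleGraph.fromRel (hataRel N D F n jw)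

lemma phi_continuous (N : ℕ) (i : ℕ × ℕ) : Continuous (phi N i) := by
  unfold phi; fun_prop

lemma phiW_nil (N : ℕ) : phiW N [] = id := rfl
lemma phiW_cons (N : ℕ) (i : ℕ × ℕ) (l : List (ℕ × ℕ)) :
    phiW N (i :: l) = phi N i ∘ phiW N l := rfl

lemma phiW_continuous (N : ℕ) (l : List (ℕ × ℕ)) : Continuous (phiW N l) := by
  induction l with
  | nil => exact continuous_id
  | cons i t ih => rw [phiW_cons]; exact (phi_continuous N i).comp ih

lemma words_finite (D : Finset (ℕ × ℕ)) (k : ℕ) : (Words D k).Finite := by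
  induction k with
  | zero =>
    refine Set.Finite.subset (Set.finite_singleton []) ?_
    rintro l ⟨hl, -⟩; simp [List.length_eq_zero_iff.mp hl]
  | succ k ih =>
    refine Set.Finite.subset (Set.Finite.image2 List.cons D.finite_toSet ih) ?_
    rintro l ⟨hl, hmem⟩
    cases l with
    | nil => simp at hl
    | cons a t =>
      exact Set.mem_image2_of_mem (hmem a (by simp))
        ⟨by simpa using hl, fun x hx => hmem x (by simp [hx])⟩

lemma words_cons (D : Finset (ℕ × ℕ)) {k : ℕ} {a : ℕ × ℕ} {l : List (ℕ × ℕ)}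
    (ha : a ∈ D) (hl : l ∈ Words D k) : a :: l ∈ Words D (k + 1) :=
  ⟨by simpa using hl.1, by
    rintro x hx
    rcases List.mem_cons.mp hx with h | h
    · exact h ▸ ha
    · exact hl.2 x h⟩

lemma F_eq_union (N : ℕ) (D : Finset (ℕ × ℕ)) (F : Set (ℝ × ℝ))
    (hF : F = ⋃ i ∈ D, phi N i '' F) (k : ℕ) :
    F = ⋃ l ∈ Words D k, phiW N l '' F := by
  induction k with
  | zero =>
    apply le_antisymm
    · intro x hx
      exact mem_biUnion (show ([] : List (ℕ × ℕ)) ∈ Words D 0 from ⟨rfl, by simp⟩)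
        ⟨x, hx, rfl⟩
    · intro x hx
      rcases mem_iUnion₂.mp hx with ⟨l, hl, hx⟩
      rw [List.length_eq_zero_iff.mp hl.1] at hx
      rcases hx with ⟨y, hy, hyx⟩
      exact hyx ▸ hy
  | succ k ih =>
    apply le_antisymm
    · intro x hx
      rw [hF] at hx
      rcases mem_iUnion₂.mp hx with ⟨i, hi, y, hy, hxy⟩
      rw [ih] at hy
      rcases mem_iUnion₂.mp hy with ⟨l, hl, z, hz, hzy⟩
      exact mem_biUnion (words_cons D hi hl)
        ⟨z, hz, by rw [phiW_cons, Function.comp_apply, hzy, hxy]⟩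
    · intro x hx
      rcases mem_iUnion₂.mp hx with ⟨l, hl, z, hz, hzx⟩
      cases l with
      | nil => exact absurd hl.1 (by simp)
      | cons i t =>
        have hi : i ∈ D := hl.2 i (by simp)
        have ht : t ∈ Words D k := ⟨by simpa using hl.1, fun a ha => hl.2 a (by simp [ha])⟩
        rw [hF]
        refine mem_iUnion₂.mpr ⟨i, hi, phiW N t z, ?_, hzx⟩
        rw [ih]; exact mem_biUnion ht ⟨z, hz, rfl⟩

section Main

variable (N : ℕ) (D : Finset (ℕ × ℕ)) (F : Set (ℝ × ℝ)) (n : ℕ) (jw : List (ℕ × ℕ))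

/-- the ambient union -/
def EE : Set (ℝ × ℝ) := ⋃ l ∈ Words D n \ {jw}, phiW N l '' F

variable {N D F n jw}

lemma cell_subset_EE {l : List (ℕ × ℕ)} (hl : l ∈ Words D n) (hlj : l ≠ jw) :
    phiW N l '' F ⊆ EE N D F n jw :=
  subset_biUnion_of_mem (u := fun l => phiW N l '' F) ⟨hl, hlj⟩

lemma adj_facts {u v : List (ℕ × ℕ)} (h : (hataMinus N D F n jw).Adj u v) :
    (u ∈ Words D n ∧ u ≠ jw) ∧ (v ∈ Words D n ∧ v ≠ jw) ∧
      ((phiW N u '' F) ∩ (phiW N v '' F)).Nonempty := by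
  rw [hataMinus, SimpleGraph.fromRel_adj] at h
  rcases h with ⟨-, h | h⟩
  · exact ⟨⟨h.1, h.2.2.1⟩, ⟨h.2.1, h.2.2.2.1⟩, h.2.2.2.2.2⟩
  · exact ⟨⟨h.2.1, h.2.2.2.1⟩, ⟨h.1, h.2.2.1⟩, (Set.inter_comm _ _) ▸ h.2.2.2.2.2⟩

lemma comp_eq_of_mem_cell (hFc : IsConnected F) {l : List (ℕ × ℕ)}
    (hl : l ∈ Words D n) (hlj : l ≠ jw) {y z : ℝ × ℝ}
    (hy : y ∈ phiW N l '' F) (hz : z ∈ phiW N l '' F) :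
    connectedComponentIn (EE N D F n jw) y = connectedComponentIn (EE N D F n jw) z := by
  have hconn : IsPreconnected (phiW N l '' F) :=
    (hFc.image _ (phiW_continuous N l).continuousOn).isPreconnected
  have h1 : phiW N l '' F ⊆ connectedComponentIn (EE N D F n jw) y :=
    hconn.subset_connectedComponentIn hy (cell_subset_EE hl hlj)
  exact connectedComponentIn_eq (h1 hz)

lemma walk_comp_eq (hFc : IsConnected F) {l l' : List (ℕ × ℕ)}
    (w : (hataMinus N D F n jw).Walk l l')
    (hl : l ∈ Words D n) (hlj : l ≠ jw) {y z : ℝ × ℝ}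
    (hy : y ∈ phiW N l '' F) (hz : z ∈ phiW N l' '' F) :
    connectedComponentIn (EE N D F n jw) y = connectedComponentIn (EE N D F n jw) z := by
  induction w generalizing y with
  | nil => exact comp_eq_of_mem_cell hFc hl hlj hy hz
  | @cons u v l'' hadj p ih =>
    obtain ⟨⟨hu, huj⟩, ⟨hv, hvj⟩, ⟨wpt, hw1, hw2⟩⟩ := adj_facts hadj
    calc connectedComponentIn (EE N D F n jw) y
        = connectedComponentIn (EE N D F n jw) wpt :=
          comp_eq_of_mem_cell hFc hu huj hy hw1
      _ = connectedComponentIn (EE N D F n jw) z := ih hv hvj hw2 hz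

/-- union of cells reachable from l₀ -/
def RS (N : ℕ) (D : Finset (ℕ × ℕ)) (F : Set (ℝ × ℝ)) (n : ℕ) (jw l₀ : List (ℕ × ℕ)) :
    Set (List (ℕ × ℕ)) :=
  {l | l ∈ Words D n ∧ l ≠ jw ∧ (hataMinus N D F n jw).Reachable l₀ l}

lemma separation (hFcpt : IsCompact F) {l₀ : List (ℕ × ℕ)}
    (hl₀ : l₀ ∈ Words D n) (hl₀j : l₀ ≠ jw) :
    ∃ U V : Set (ℝ × ℝ), IsOpen U ∧ IsOpen V ∧ Disjoint U V ∧
      (⋃ l ∈ RS N D F n jw l₀, phiW N l '' F) ⊆ U ∧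
      (⋃ l ∈ (Words D n \ {jw}) \ RS N D F n jw l₀, phiW N l '' F) ⊆ V := by
  set S := ⋃ l ∈ RS N D F n jw l₀, phiW N l '' F with hSdef
  set T := ⋃ l ∈ (Words D n \ {jw}) \ RS N D F n jw l₀, phiW N l '' F with hTdef
  have hRfin : (RS N D F n jw l₀).Finite :=
    (words_finite D n).subset fun l hl => hl.1
  have hTfin : ((Words D n \ {jw}) \ RS N D F n jw l₀).Finite :=
    (words_finite D n).subset fun l hl => hl.1.1
  have hScpt : IsCompact S :=
    hRfin.isCompact_biUnion fun l _ => hFcpt.image (phiW_continuous N l)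
  have hTcpt : IsCompact T :=
    hTfin.isCompact_biUnion fun l _ => hFcpt.image (phiW_continuous N l)
  have hdisj : Disjoint S T := by
    rw [Set.disjoint_left]
    rintro x hxS hxT
    rcases mem_iUnion₂.mp hxS with ⟨l, hlR, hxl⟩
    rcases mem_iUnion₂.mp hxT with ⟨m, ⟨⟨hm, hmj⟩, hmR⟩, hxm⟩
    apply hmR
    refine ⟨hm, (by simpa using hmj : m ≠ jw), ?_⟩
    have hlm : l ≠ m := fun h => hmR (h ▸ hlR)
    have hadj : (hataMinus N D F n jw).Adj l m := by
      rw [hataMinus, SimpleGraph.fromRel_adj]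
      exact ⟨hlm, Or.inl ⟨hlR.1, hm, hlR.2.1, by simpa using hmj, hlm, ⟨x, hxl, hxm⟩⟩⟩
    exact hlR.2.2.trans hadj.reachable
  obtain ⟨U, V, hU, hV, hSU, hTV, hUV⟩ :=
    SeparatedNhds.of_isCompact_isCompact hScpt hTcpt hdisj
  exact ⟨U, V, hU, hV, hUV, hSU, hTV⟩

end Main

theorem stmt11 (N : ℕ) (D : Finset (ℕ × ℕ)) (hND : GoodDigits N D)
    (F : Set (ℝ × ℝ)) (hF : IsAttractor N D F) (hFconn : IsConnected F)
    (n : ℕ) (hn : 1 ≤ n) (j1 : ℕ × ℕ) (jrest : List (ℕ × ℕ))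
    (hj : j1 :: jrest ∈ Words D n)
    (ω τ : ℕ × ℕ) (hω : ω ∈ D) (hτ : τ ∈ D) (hωj : ω ≠ j1) (hτj : τ ≠ j1) :
    (∀ a ∈ Words D (n - 1), ∀ b ∈ Words D (n - 1),
        ¬ (hataMinus N D F n (j1 :: jrest)).Reachable (ω :: a) (τ :: b)) ↔
      SepComp (⋃ l ∈ Words D n \ {j1 :: jrest}, phiW N l '' F)
        (phi N ω '' F) (phi N τ '' F) := by
  obtain ⟨hFne, hFcpt, hFeq⟩ := hF
  set jw := j1 :: jrest with hjw
  have hE : (⋃ l ∈ Words D n \ {jw}, phiW N l '' F) = EE N D F n jw := rfl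
  -- decomposition of first-level cells
  have hdecomp : ∀ σ : ℕ × ℕ, σ ∈ D →
      phi N σ '' F = ⋃ a ∈ Words D (n - 1), phiW N (σ :: a) '' F := by
    intro σ hσ
    conv_lhs => rw [F_eq_union N D F hFeq (n - 1), Set.image_iUnion₂]
    exact Set.iUnion₂_congr fun a _ => by rw [phiW_cons, Set.image_comp]
  have hmem : ∀ σ : ℕ × ℕ, σ ∈ D → σ ≠ j1 → ∀ a ∈ Words D (n - 1),
      (σ :: a) ∈ Words D n ∧ σ :: a ≠ jw := by
    intro σ hσ hσj a ha
    have := words_cons D hσ ha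
    rw [Nat.sub_add_cancel hn] at this
    exact ⟨this, fun h => hσj (by injection h)⟩
  have hsub : ∀ σ : ℕ × ℕ, σ ∈ D → σ ≠ j1 → phi N σ '' F ⊆ EE N D F n jw := by
    intro σ hσ hσj
    rw [hdecomp σ hσ]
    exact Set.iUnion₂_subset fun a ha =>
      cell_subset_EE (hmem σ hσ hσj a ha).1 (hmem σ hσ hσj a ha).2
  rw [hE]
  constructor
  · intro h1
    refine ⟨hsub ω hω hωj, hsub τ hτ hτj, ?_⟩
    intro y hy z hz heq
    rw [hdecomp ω hω] at hy
    rcases Set.mem_iUnion₂.mp hy with ⟨a, ha, hya⟩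
    rw [hdecomp τ hτ] at hz
    rcases Set.mem_iUnion₂.mp hz with ⟨b, hb, hzb⟩
    obtain ⟨hωa, hωaj⟩ := hmem ω hω hωj a ha
    obtain ⟨hτb, hτbj⟩ := hmem τ hτ hτj b hb
    obtain ⟨U, V, hU, hV, hUV, hSU, hTV⟩ := separation hFcpt hωa hωaj
    set l₀ := ω :: a
    have hyE : y ∈ EE N D F n jw := cell_subset_EE hωa hωaj hya
    have hzE : z ∈ EE N D F n jw := cell_subset_EE hτb hτbj hzb
    have hyS : y ∈ ⋃ l ∈ RS N D F n jw l₀, phiW N l '' F :=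
      Set.mem_biUnion ⟨hωa, hωaj, SimpleGraph.Reachable.refl _⟩ hya
    have hbT : (τ :: b) ∈ (Words D n \ {jw}) \ RS N D F n jw l₀ :=
      ⟨⟨hτb, hτbj⟩, fun hR => h1 a ha b hb hR.2.2⟩
    have hzT : z ∈ ⋃ l ∈ (Words D n \ {jw}) \ RS N D F n jw l₀, phiW N l '' F :=
      Set.mem_biUnion hbT hzb
    have hEUV : EE N D F n jw ⊆ U ∪ V := by
      intro x hx
      rcases Set.mem_iUnion₂.mp hx with ⟨l, hl, hxl⟩
      by_cases hR : l ∈ RS N D F n jw l₀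
      · exact Or.inl (hSU (Set.mem_biUnion hR hxl))
      · exact Or.inr (hTV (Set.mem_biUnion (⟨hl, hR⟩ :
          l ∈ (Words D n \ {jw}) \ RS N D F n jw l₀) hxl))
    have hcomp : connectedComponentIn (EE N D F n jw) y ⊆ U :=
      IsPreconnected.subset_left_of_subset_union hU hV hUV
        ((connectedComponentIn_subset _ _).trans hEUV)
        ⟨y, mem_connectedComponentIn hyE, hSU hyS⟩
        isPreconnected_connectedComponentIn
    have hzU : z ∈ U := hcomp (heq ▸ mem_connectedComponentIn hzE)
    exact (Set.disjoint_left.mp hUV hzU) (hTV hzT)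
  · rintro ⟨-, -, hsep⟩ a ha b hb hr
    obtain ⟨hωa, hωaj⟩ := hmem ω hω hωj a ha
    obtain ⟨hτb, hτbj⟩ := hmem τ hτ hτj b hb
    obtain ⟨y, hy⟩ : (phiW N (ω :: a) '' F).Nonempty := hFne.image _
    obtain ⟨z, hz⟩ : (phiW N (τ :: b) '' F).Nonempty := hFne.image _
    have heq : connectedComponentIn (EE N D F n jw) y
        = connectedComponentIn (EE N D F n jw) z :=
      hr.elim fun w => walk_comp_eq hFconn w hωa hωaj hy hz
    refine hsep y ?_ z ?_ heq
    · rw [hdecomp ω hω]; exact Set.mem_biUnion ha hy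
    · rw [hdecomp τ hτ]; exact Set.mem_biUnion hb hz
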